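/- Monotonicity and invariance of α-sets: Let x ∈ X, σ ∈ S^G_{<∞} with domain d and range c, and let α, β ≥ 1 be countable ordinals. Then: (a) if β ≤ α then B_α(x,σ) ⊆ B_β(x,σ); (b) V^G_σ·x ⊆ B_α(x,σ) and B_α(x,σ) is V^G_c-invariant (i.e. g·B_α(x,σ) = B_α(x,σ) for every g ∈ V^G_c); (c) if δ ∈ S^G_{<∞} and δ ⊇ σ then B_α(x,δ) ⊆ B_α(x,σ). -/

import Mathlib

open Set Pointwise

noncomputable section

/-- `S_∞`, the group of all permutations of `ℕ`. -/
abbrev Sinf : Type := Equiv.Perm ℕ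

/-- The topology of pointwise convergence on `S_∞`. -/
instance SinfTopology : TopologicalSpace Sinf :=
  TopologicalSpace.induced (fun g : Sinf => (g : ℕ → ℕ)) Pi.topologicalSpace

/-- The graph of the restriction of a permutation `g` to a finite set `d`. -/
def restr (g : Sinf) (d : Finset ℕ) : Set (ℕ × ℕ) := {p | p.1 ∈ d ∧ g p.1 = p.2}

/-- The domain of a partial map coded by its graph. -/
def pdom (σ : Set (ℕ × ℕ)) : Set ℕ := Prod.fst '' σ

/-- The range of a partial map coded by its graph. -/
def prng (σ : Set (ℕ × ℕ)) : Set ℕ := Prod.snd '' σ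

/-- `S^G_{<∞}`: graphs of restrictions of elements of `G` to finite subsets of `ℕ`. -/
def SGfin (G : Subgroup Sinf) : Set (Set (ℕ × ℕ)) :=
  {σ | ∃ g ∈ G, ∃ d : Finset ℕ, σ = restr g d}

/-- `V^G_σ`: the elements of `G` extending the partial bijection `σ`. -/
def Vb (G : Subgroup Sinf) (σ : Set (ℕ × ℕ)) : Set G :=
  {g : G | ∀ p ∈ σ, (g : Sinf) p.1 = p.2}

/-- `V^G_c`: the pointwise stabilizer of `c ⊆ ℕ` in `G`. -/
def Vc (G : Subgroup Sinf) (c : Set ℕ) : Set G :=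
  {g : G | ∀ k ∈ c, (g : Sinf) k = k}

/-- The identity partial bijection on `c`. -/
def idb (c : Set ℕ) : Set (ℕ × ℕ) := {p | p.1 ∈ c ∧ p.2 = p.1}

/-- The composition `σ ∘ f`, restricted to `f⁻¹[dom σ]`. -/
def compR (σ : Set (ℕ × ℕ)) (f : Sinf) : Set (ℕ × ℕ) := {p | (f p.1, p.2) ∈ σ}

/-- The composition `f ∘ σ`. -/
def compL (f : Sinf) (σ : Set (ℕ × ℕ)) : Set (ℕ × ℕ) := {p | (p.1, f⁻¹ p.2) ∈ σ}

/-- The Borel classes `Σ⁰_α(X)`: `Σ⁰_1(X)` consists of the open sets, and for `α > 1`,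
`Σ⁰_α(X)` consists of countable unions of sets whose complements lie in
`⋃_{1 ≤ β < α} Σ⁰_β(X)` (i.e. of sets from `⋃_{1 ≤ β < α} Π⁰_β(X)`). -/
def SigmaB (X : Type*) [TopologicalSpace X] (α : Ordinal.{0}) : Set (Set X) :=
  if α ≤ 1 then {s | IsOpen s}
  else {s | ∃ f : ℕ → Set X,
      (∀ n, ∃ β : {γ : Ordinal.{0} // γ < α}, 1 ≤ β.1 ∧ (f n)ᶜ ∈ SigmaB X β.1) ∧
      s = ⋃ n, f n}
termination_by α
decreasing_by exact β.2

/-- The Borel classes `Π⁰_α(X)`: complements of sets in `Σ⁰_α(X)`. -/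
def PiB (X : Type*) [TopologicalSpace X] (α : Ordinal.{0}) : Set (Set X) :=
  {s | sᶜ ∈ SigmaB X α}

section Action

variable (G : Subgroup Sinf) {X : Type*} [TopologicalSpace X] [MulAction G X]

/-- The image `S • x` of a point under a set of group elements. -/
def setOrb (S : Set G) (x : X) : Set X := (fun g : G => g • x) '' S

/-- The image `S • B` of a set under a set of group elements. -/
def setSmul (S : Set G) (B : Set X) : Set X := ⋃ g ∈ S, g • B

/-- The `1`-sets `B₁(x, σ)`. -/
def BsetOne (A : ℕ → Set X) (σ : Set (ℕ × ℕ)) (x : X) : Set X :=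
  (⋂ l, ⋂ (_ : (setOrb G (Vb G σ) x ∩ A l).Nonempty), setSmul G (Vc G (prng σ)) (A l)) ∩
    (⋂ l, ⋂ (_ : setOrb G (Vb G σ) x ∩ A l = ∅), (setSmul G (Vc G (prng σ)) (A l))ᶜ)

/-- The successor step of the recursion defining the `α`-sets. -/
def BsetSucc (prev : Set (ℕ × ℕ) → X → Set X) (σ : Set (ℕ × ℕ)) (x : X) : Set X :=
  (⋂ b : Finset ℕ, ⋂ (_ : pdom σ ⊆ ↑b),
      ⋃ σ' ∈ SGfin G, ⋃ (_ : σ ⊆ σ') (_ : pdom σ' = ↑b), prev σ' x) ∩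
    (⋂ a : Finset ℕ, ⋂ (_ : prng σ ⊆ ↑a),
      ⋃ σ' ∈ SGfin G, ⋃ (_ : σ ⊆ σ') (_ : prng σ' = ↑a), prev σ' x)

/-- The `α`-sets `B_α(x, σ)`, for `α ≥ 1` (the value at `α = 0` is junk). -/
def Bset (A : ℕ → Set X) (α : Ordinal.{0}) : Set (ℕ × ℕ) → X → Set X :=
  @Ordinal.limitRecOn (fun _ => Set (ℕ × ℕ) → X → Set X) α
    (fun _ _ => univ)
    (fun o ih => if o = 0 then BsetOne G A else BsetSucc G ih)
    (fun o _ ih σ x => ⋂ β : Ordinal.{0}, ⋂ (hβ : β < o), ⋂ (_ : 1 ≤ β), ih β hβ σ x)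

/-- The family `𝓑^x_{<α}` consisting of the basic open sets together with all
`β`-sets of `x` for `1 ≤ β < α`. -/
def BltFam (A : ℕ → Set X) (x : X) (α : Ordinal.{0}) : Set (Set X) :=
  {B | (∃ l, B = A l) ∨
    ∃ β : Ordinal.{0}, 1 ≤ β ∧ β < α ∧ ∃ σ ∈ SGfin G, B = Bset G A β σ x}

/-- `γ^G_*(x)`: the least countable ordinal `γ` such that for all `σ, δ ∈ S^G_{<∞}`
with equal ranges, if `B_α(x,σ) ≠ B_α(x,δ)` for some countable ordinal `α ≥ 1`,
then already `B_γ(x,σ) ≠ B_γ(x,δ)`. -/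
def gammaStar (A : ℕ → Set X) (x : X) : Ordinal :=
  sInf {γ : Ordinal.{0} | γ.card ≤ Cardinal.aleph0 ∧
    ∀ σ ∈ SGfin G, ∀ δ ∈ SGfin G, prng σ = prng δ →
      (∃ α : Ordinal.{0}, 1 ≤ α ∧ α.card ≤ Cardinal.aleph0 ∧
        Bset G A α σ x ≠ Bset G A α δ x) →
      Bset G A γ σ x ≠ Bset G A γ δ x}

end Action

/-- The topology on a subset `S ⊆ X` generated by the traces on `S` of the members
of the family `F`. -/
def traceTop {X : Type*} (S : Set X) (F : Set (Set X)) : TopologicalSpace S :=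
  TopologicalSpace.generateFrom {u : Set S | ∃ B ∈ F, u = Subtype.val ⁻¹' B}

/-- The space of closed subsets of `Y`. -/
def EffrosSpace (Y : Type*) [TopologicalSpace Y] := {K : Set Y // IsClosed K}

/-- The Effros Borel structure on the space of closed subsets of `Y`. -/
def effrosSigma (Y : Type*) [TopologicalSpace Y] : MeasurableSpace (EffrosSpace Y) :=
  MeasurableSpace.generateFrom
    {S | ∃ U : Set Y, IsOpen U ∧ S = {K : EffrosSpace Y | (K.1 ∩ U).Nonempty}}

section Helpers

variable {G : Subgroup Sinf}

lemma pdom_restr (g : Sinf) (d : Finset ℕ) : pdom (restr g d) = ↑d := by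
  ext j
  constructor
  · rintro ⟨p, hp, rfl⟩; exact hp.1
  · intro hj; exact ⟨(j, g j), ⟨hj, rfl⟩, rfl⟩

lemma prng_restr (g : Sinf) (d : Finset ℕ) : prng (restr g d) = ⇑g '' ↑d := by
  ext k
  constructor
  · rintro ⟨p, hp, rfl⟩; exact ⟨p.1, hp.1, hp.2⟩
  · rintro ⟨j, hj, rfl⟩; exact ⟨(j, g j), ⟨hj, rfl⟩, rfl⟩

lemma compL_restr (f g : Sinf) (d : Finset ℕ) : compL f (restr g d) = restr (f * g) d := by
  ext p
  simp only [compL, restr, Set.mem_setOf_eq, Equiv.Perm.mul_apply]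
  constructor
  · rintro ⟨h1, h2⟩
    exact ⟨h1, by rw [h2]; exact Equiv.apply_symm_apply f p.2⟩
  · rintro ⟨h1, h2⟩
    exact ⟨h1, by rw [← h2]; exact (Equiv.symm_apply_apply f _).symm⟩

lemma compL_one (σ : Set (ℕ × ℕ)) : compL 1 σ = σ := by
  ext p; simp [compL]

lemma compL_compL (f f' : Sinf) (σ : Set (ℕ × ℕ)) :
    compL f (compL f' σ) = compL (f * f') σ := by
  ext p; simp [compL, mul_inv_rev, Equiv.Perm.mul_apply]

lemma compL_mono (f : Sinf) {σ τ : Set (ℕ × ℕ)} (h : σ ⊆ τ) : compL f σ ⊆ compL f τ :=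
  fun p hp => h hp

lemma pdom_compL (f : Sinf) (σ : Set (ℕ × ℕ)) : pdom (compL f σ) = pdom σ := by
  ext j
  constructor
  · rintro ⟨p, hp, rfl⟩; exact ⟨(p.1, f⁻¹ p.2), hp, rfl⟩
  · rintro ⟨p, hp, rfl⟩
    exact ⟨(p.1, f p.2), by simpa [compL] using hp, rfl⟩

lemma prng_compL (f : Sinf) (σ : Set (ℕ × ℕ)) : prng (compL f σ) = ⇑f '' prng σ := by
  ext k
  constructor
  · rintro ⟨p, hp, rfl⟩
    exact ⟨f⁻¹ p.2, ⟨_, hp, rfl⟩, Equiv.apply_symm_apply f p.2⟩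
  · rintro ⟨m, ⟨p, hp, rfl⟩, rfl⟩
    exact ⟨(p.1, f p.2), by simpa [compL] using hp, rfl⟩

lemma SGfin_compL {σ : Set (ℕ × ℕ)} (hσ : σ ∈ SGfin G) (u : G) :
    compL (↑u) σ ∈ SGfin G := by
  obtain ⟨g, hg, d, rfl⟩ := hσ
  exact ⟨↑u * g, mul_mem u.2 hg, d, compL_restr _ _ _⟩

lemma exists_mem_Vb {σ : Set (ℕ × ℕ)} (hσ : σ ∈ SGfin G) : ∃ g : G, g ∈ Vb G σ := by
  obtain ⟨g, hg, d, rfl⟩ := hσ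
  exact ⟨⟨g, hg⟩, fun p hp => hp.2⟩

lemma Vc_one (c : Set ℕ) : (1 : G) ∈ Vc G c := by
  intro k _; simp

lemma Vc_inv {c : Set ℕ} {g : G} (h : g ∈ Vc G c) : g⁻¹ ∈ Vc G c := by
  intro k hk
  show ((g : Sinf))⁻¹ k = k
  rw [Equiv.Perm.inv_eq_iff_eq]
  exact (h k hk).symm

lemma Vc_mul {c : Set ℕ} {g h : G} (hg : g ∈ Vc G c) (hh : h ∈ Vc G c) : g * h ∈ Vc G c := by
  intro k hk
  show (g : Sinf) ((h : Sinf) k) = k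
  rw [hh k hk]; exact hg k hk

lemma Vc_antitone {c c' : Set ℕ} (h : c ⊆ c') : Vc G c' ⊆ Vc G c :=
  fun g hg k hk => hg k (h hk)

lemma Vb_antitone {σ δ : Set (ℕ × ℕ)} (h : σ ⊆ δ) : Vb G δ ⊆ Vb G σ :=
  fun g hg p hp => hg p (h hp)

lemma mul_mem_Vb {σ : Set (ℕ × ℕ)} {u h : G} (hu : u ∈ Vc G (prng σ)) (hh : h ∈ Vb G σ) :
    u * h ∈ Vb G σ := by
  intro p hp
  show (u : Sinf) ((h : Sinf) p.1) = p.2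
  rw [hh p hp]
  exact hu p.2 ⟨p, hp, rfl⟩

lemma mul_inv_mem_Vc {σ : Set (ℕ × ℕ)} {g h : G} (hg : g ∈ Vb G σ) (hh : h ∈ Vb G σ) :
    g * h⁻¹ ∈ Vc G (prng σ) := by
  rintro k ⟨p, hp, rfl⟩
  show (g : Sinf) (((h : Sinf))⁻¹ p.2) = p.2
  have h1 : ((h : Sinf))⁻¹ p.2 = p.1 := by
    rw [Equiv.Perm.inv_eq_iff_eq]; exact (hh p hp).symm
  rw [h1]; exact hg p hp

lemma Vb_compL {σ : Set (ℕ × ℕ)} (u : G) {g : G} :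
    g ∈ Vb G (compL (↑u) σ) ↔ u⁻¹ * g ∈ Vb G σ := by
  constructor
  · intro h p hp
    have h1 : ((p.1, (u : Sinf) p.2) : ℕ × ℕ) ∈ compL (↑u) σ := by
      simpa [compL] using hp
    have h2 := h _ h1
    show ((u : Sinf))⁻¹ ((g : Sinf) p.1) = p.2
    rw [h2]; exact Equiv.symm_apply_apply _ _
  · intro h p hp
    have h2 := h _ hp
    have h3 : ((u : Sinf))⁻¹ ((g : Sinf) p.1) = ((u : Sinf))⁻¹ p.2 := h2
    exact ((u : Sinf))⁻¹.injective h3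

lemma Vc_image (u : G) (c : Set ℕ) {g : G} :
    g ∈ Vc G (⇑(u : Sinf) '' c) ↔ u⁻¹ * g * u ∈ Vc G c := by
  constructor
  · intro h k hk
    have h1 := h ((u : Sinf) k) ⟨k, hk, rfl⟩
    show ((u : Sinf))⁻¹ ((g : Sinf) ((u : Sinf) k)) = k
    rw [h1]; exact Equiv.symm_apply_apply _ _
  · rintro h k ⟨m, hm, rfl⟩
    have h2 := h m hm
    show (g : Sinf) ((u : Sinf) m) = (u : Sinf) m
    have h3 : (g : Sinf) ((u : Sinf) m)
        = (u : Sinf) (((u : Sinf))⁻¹ ((g : Sinf) ((u : Sinf) m))) :=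
      (Equiv.apply_symm_apply _ _).symm
    rw [h3]
    exact congrArg _ h2

lemma compL_eq_self {σ : Set (ℕ × ℕ)} {u : G} (hu : u ∈ Vc G (prng σ)) :
    compL (↑u) σ = σ := by
  ext p
  simp only [compL, Set.mem_setOf_eq]
  constructor
  · intro hp
    have h1 := hu _ (⟨_, hp, rfl⟩ : ((u : Sinf))⁻¹ p.2 ∈ prng σ)
    have h2 : p.2 = ((u : Sinf))⁻¹ p.2 := (Equiv.apply_symm_apply _ _).symm.trans h1
    have h3 : p = (p.1, ((u : Sinf))⁻¹ p.2) := Prod.ext rfl h2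
    rw [h3]; exact hp
  · intro hp
    have h1 := hu p.2 ⟨p, hp, rfl⟩
    have h2 : ((u : Sinf))⁻¹ p.2 = p.2 := by rw [Equiv.Perm.inv_eq_iff_eq]; exact h1.symm
    rw [h2]; simpa using hp

end Helpers

section Proofs2

variable {G : Subgroup Sinf} {X : Type*} [TopologicalSpace X] [MulAction G X]

lemma mem_setSmul {S : Set G} {B : Set X} {y : X} :
    y ∈ setSmul G S B ↔ ∃ g ∈ S, g⁻¹ • y ∈ B := by
  constructor
  · intro hy
    obtain ⟨g, hg, hyg⟩ := Set.mem_iUnion₂.mp hy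
    exact ⟨g, hg, Set.mem_smul_set_iff_inv_smul_mem.mp hyg⟩
  · rintro ⟨g, hg, hyg⟩
    exact Set.mem_iUnion₂.mpr ⟨g, hg, Set.mem_smul_set_iff_inv_smul_mem.mpr hyg⟩

lemma mem_setOrb {S : Set G} {x y : X} :
    y ∈ setOrb G S x ↔ ∃ g ∈ S, g • x = y := by
  simp [setOrb]

lemma mem_BsetOne {A : ℕ → Set X} {σ : Set (ℕ × ℕ)} {x y : X} :
    y ∈ BsetOne G A σ x ↔
      (∀ l, (setOrb G (Vb G σ) x ∩ A l).Nonempty → y ∈ setSmul G (Vc G (prng σ)) (A l)) ∧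
      (∀ l, setOrb G (Vb G σ) x ∩ A l = ∅ → y ∉ setSmul G (Vc G (prng σ)) (A l)) := by
  simp [BsetOne, Set.mem_iInter]

lemma mem_BsetSucc {prev : Set (ℕ × ℕ) → X → Set X} {σ : Set (ℕ × ℕ)} {x y : X} :
    y ∈ BsetSucc G prev σ x ↔
      (∀ b : Finset ℕ, pdom σ ⊆ ↑b →
        ∃ σ', σ' ∈ SGfin G ∧ σ ⊆ σ' ∧ pdom σ' = ↑b ∧ y ∈ prev σ' x) ∧
      (∀ a : Finset ℕ, prng σ ⊆ ↑a →
        ∃ σ', σ' ∈ SGfin G ∧ σ ⊆ σ' ∧ prng σ' = ↑a ∧ y ∈ prev σ' x) := by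
  simp only [BsetSucc, Set.mem_inter_iff, Set.mem_iInter, Set.mem_iUnion, exists_prop]

lemma Bset_one (A : ℕ → Set X) : Bset G A 1 = BsetOne G A := by
  rw [show (1 : Ordinal.{0}) = Order.succ 0 from (Ordinal.succ_zero).symm]
  unfold Bset
  rw [Ordinal.limitRecOn_succ]
  simp

lemma Bset_succ (A : ℕ → Set X) {o : Ordinal.{0}} (ho : o ≠ 0) :
    Bset G A (Order.succ o) = BsetSucc G (Bset G A o) := by
  unfold Bset
  rw [Ordinal.limitRecOn_succ, if_neg ho]

lemma Bset_limit (A : ℕ → Set X) {o : Ordinal.{0}} (ho : Order.IsSuccLimit o) (σ : Set (ℕ × ℕ)) (x : X) :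
    Bset G A o σ x = ⋂ β, ⋂ (_ : β < o), ⋂ (_ : 1 ≤ β), Bset G A β σ x := by
  unfold Bset
  rw [Ordinal.limitRecOn_limit _ _ _ _ ho]

end Proofs2

section Proofs3

variable {G : Subgroup Sinf} {X : Type*} [TopologicalSpace X] [MulAction G X]
  [ContinuousSMul G X] {A : ℕ → Set X}

lemma exists_basic (hbasis : TopologicalSpace.IsTopologicalBasis (Set.range A))
    {z : X} {u : Set X} (hu : IsOpen u) (hz : z ∈ u) : ∃ l, z ∈ A l ∧ A l ⊆ u := by
  obtain ⟨v, hv, hzv, hvu⟩ := hbasis.exists_subset_of_mem_open hz hu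
  obtain ⟨l, rfl⟩ := hv
  exact ⟨l, hzv, hvu⟩

lemma A_open (hbasis : TopologicalSpace.IsTopologicalBasis (Set.range A)) (l : ℕ) :
    IsOpen (A l) := hbasis.isOpen ⟨l, rfl⟩

lemma BsetOne_orbit (σ : Set (ℕ × ℕ)) (x : X) :
    setOrb G (Vb G σ) x ⊆ BsetOne G A σ x := by
  rintro _ ⟨g, hg, rfl⟩
  rw [mem_BsetOne]
  constructor
  · rintro l ⟨z, ⟨h, hh, rfl⟩, hmem⟩
    rw [mem_setSmul]
    refine ⟨g * h⁻¹, mul_inv_mem_Vc hg hh, ?_⟩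
    have he : (g * h⁻¹)⁻¹ • g • x = h • x := by simp only [smul_smul]; congr 1; group
    rw [he]; exact hmem
  · intro l hl
    rw [mem_setSmul]
    rintro ⟨u, hu, hmem⟩
    have h1 : u⁻¹ * g ∈ Vb G σ := mul_mem_Vb (Vc_inv hu) hg
    have h2 : (u⁻¹ * g) • x ∈ setOrb G (Vb G σ) x ∩ A l :=
      ⟨⟨_, h1, rfl⟩, by rw [mul_smul]; exact hmem⟩
    rw [hl] at h2
    exact h2

lemma BsetOne_transl (hbasis : TopologicalSpace.IsTopologicalBasis (Set.range A))
    (σ : Set (ℕ × ℕ)) (x : X) (u : G) :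
    BsetOne G A (compL (↑u) σ) x ⊆ u • BsetOne G A σ x := by
  intro y hy
  rw [Set.mem_smul_set_iff_inv_smul_mem, mem_BsetOne]
  rw [mem_BsetOne] at hy
  obtain ⟨hy1, hy2⟩ := hy
  constructor
  · rintro l ⟨z, ⟨h, hh, rfl⟩, hmem⟩
    have hz : (u * h) • x ∈ u • A l := by
      rw [Set.mem_smul_set_iff_inv_smul_mem]
      have he : u⁻¹ • (u * h) • x = h • x := by simp only [smul_smul]; congr 1; group
      rw [he]; exact hmem
    obtain ⟨l', hz', hsub⟩ := exists_basic hbasis ((A_open hbasis l).smul u) hz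
    have hne : (setOrb G (Vb G (compL (↑u) σ)) x ∩ A l').Nonempty :=
      ⟨(u * h) • x, ⟨u * h, (Vb_compL u).mpr (by rwa [inv_mul_cancel_left]), rfl⟩, hz'⟩
    obtain ⟨v, hv, hvy⟩ := mem_setSmul.mp (hy1 l' hne)
    have hvy2 := hsub hvy
    rw [Set.mem_smul_set_iff_inv_smul_mem] at hvy2
    rw [mem_setSmul]
    refine ⟨u⁻¹ * v * u, ?_, ?_⟩
    · have hv' : v ∈ Vc G (⇑(u : Sinf) '' prng σ) := by rwa [← prng_compL]
      exact (Vc_image u (prng σ)).mp hv'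
    · have he : (u⁻¹ * v * u)⁻¹ • u⁻¹ • y = u⁻¹ • v⁻¹ • y := by
        simp only [smul_smul]; congr 1; group
      rw [he]; exact hvy2
  · intro l hl
    rw [mem_setSmul]
    rintro ⟨w, hw, hwm⟩
    have hyo : y ∈ (u * w) • A l := by
      rw [Set.mem_smul_set_iff_inv_smul_mem]
      have he : (u * w)⁻¹ • y = w⁻¹ • u⁻¹ • y := by simp only [smul_smul, mul_inv_rev, mul_assoc]
      rw [he]; exact hwm
    obtain ⟨l', hyl', hsub⟩ := exists_basic hbasis ((A_open hbasis l).smul (u * w)) hyo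
    rcases Set.eq_empty_or_nonempty (setOrb G (Vb G (compL (↑u) σ)) x ∩ A l') with hcase | hcase
    · exact hy2 l' hcase (mem_setSmul.mpr ⟨1, Vc_one _, by simpa using hyl'⟩)
    · obtain ⟨z, ⟨g, hg, rfl⟩, hgl⟩ := hcase
      have h1 := hsub hgl
      rw [Set.mem_smul_set_iff_inv_smul_mem] at h1
      have h2 : (w⁻¹ * (u⁻¹ * g)) • x ∈ A l := by
        have he : (w⁻¹ * (u⁻¹ * g)) • x = (u * w)⁻¹ • g • x := by
          simp only [smul_smul, mul_inv_rev, mul_assoc]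
        rw [he]; exact h1
      have hmem : w⁻¹ * (u⁻¹ * g) ∈ Vb G σ := mul_mem_Vb (Vc_inv hw) ((Vb_compL u).mp hg)
      have h3 : ((w⁻¹ * (u⁻¹ * g)) • x) ∈ setOrb G (Vb G σ) x ∩ A l := ⟨⟨_, hmem, rfl⟩, h2⟩
      rw [hl] at h3
      exact h3

lemma BsetOne_ext (hbasis : TopologicalSpace.IsTopologicalBasis (Set.range A))
    {σ δ : Set (ℕ × ℕ)} (hδ : δ ∈ SGfin G) (hσδ : σ ⊆ δ) (x : X) :
    BsetOne G A δ x ⊆ BsetOne G A σ x := by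
  intro y hy
  rw [mem_BsetOne] at hy ⊢
  obtain ⟨hy1, hy2⟩ := hy
  have hsub_c : prng σ ⊆ prng δ := fun k ⟨p, hp, he⟩ => ⟨p, hσδ hp, he⟩
  obtain ⟨g₀, hg₀⟩ := exists_mem_Vb hδ
  constructor
  · rintro l ⟨z, ⟨h, hh, rfl⟩, hmem⟩
    have hw : g₀ * h⁻¹ ∈ Vc G (prng σ) := mul_inv_mem_Vc (Vb_antitone hσδ hg₀) hh
    have hzo : g₀ • x ∈ (g₀ * h⁻¹) • A l := by
      rw [Set.mem_smul_set_iff_inv_smul_mem]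
      have he : (g₀ * h⁻¹)⁻¹ • g₀ • x = h • x := by simp only [smul_smul]; congr 1; group
      rw [he]; exact hmem
    obtain ⟨l', hzl', hsub⟩ := exists_basic hbasis ((A_open hbasis l).smul _) hzo
    have hne : (setOrb G (Vb G δ) x ∩ A l').Nonempty := ⟨g₀ • x, ⟨g₀, hg₀, rfl⟩, hzl'⟩
    obtain ⟨v, hv, hvy⟩ := mem_setSmul.mp (hy1 l' hne)
    have h1 := hsub hvy
    rw [Set.mem_smul_set_iff_inv_smul_mem] at h1
    rw [mem_setSmul]
    refine ⟨v * (g₀ * h⁻¹), Vc_mul (Vc_antitone hsub_c hv) hw, ?_⟩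
    have he : (v * (g₀ * h⁻¹))⁻¹ • y = (g₀ * h⁻¹)⁻¹ • v⁻¹ • y := by
      simp only [smul_smul, mul_inv_rev, mul_assoc]
    rw [he]; exact h1
  · intro l hl
    rw [mem_setSmul]
    rintro ⟨w, hw, hwm⟩
    have hyo : y ∈ w • A l := Set.mem_smul_set_iff_inv_smul_mem.mpr hwm
    obtain ⟨l', hyl', hsub⟩ := exists_basic hbasis ((A_open hbasis l).smul w) hyo
    rcases Set.eq_empty_or_nonempty (setOrb G (Vb G δ) x ∩ A l') with hcase | hcase
    · exact hy2 l' hcase (mem_setSmul.mpr ⟨1, Vc_one _, by simpa using hyl'⟩)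
    · obtain ⟨z, ⟨g, hg, rfl⟩, hgl⟩ := hcase
      have h1 := hsub hgl
      rw [Set.mem_smul_set_iff_inv_smul_mem] at h1
      have hmem : w⁻¹ * g ∈ Vb G σ := mul_mem_Vb (Vc_inv hw) (Vb_antitone hσδ hg)
      have h2 : ((w⁻¹ * g) • x) ∈ setOrb G (Vb G σ) x ∩ A l :=
        ⟨⟨_, hmem, rfl⟩, by rw [mul_smul]; exact h1⟩
      rw [hl] at h2
      exact h2

end Proofs3

section Proofs4

variable {G : Subgroup Sinf} {X : Type*} [TopologicalSpace X] [MulAction G X]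
  [ContinuousSMul G X] {A : ℕ → Set X}

lemma coe_inv_G {G : Subgroup Sinf} (u : G) : ((u⁻¹ : G) : Sinf) = ((u : Sinf))⁻¹ := rfl

lemma compL_inv_cancel {G : Subgroup Sinf} (u : G) (τ : Set (ℕ × ℕ)) :
    compL (↑u) (compL ((u : Sinf))⁻¹ τ) = τ := by
  have h : ((u : Sinf)) * ((u : Sinf))⁻¹ = 1 := by group
  rw [compL_compL, h, compL_one]

lemma SGfin_compL_inv {G : Subgroup Sinf} {τ : Set (ℕ × ℕ)} (hτ : τ ∈ SGfin G) (u : G) :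
    compL ((u : Sinf))⁻¹ τ ∈ SGfin G := by
  have h := SGfin_compL hτ u⁻¹
  rwa [coe_inv_G] at h

lemma subset_compL_inv {G : Subgroup Sinf} {σ τ : Set (ℕ × ℕ)} (u : G)
    (h : compL (↑u) σ ⊆ τ) : σ ⊆ compL ((u : Sinf))⁻¹ τ := by
  intro p hp
  have h1 : ((p.1, (u : Sinf) p.2) : ℕ × ℕ) ∈ compL (↑u) σ := by simpa [compL] using hp
  have h2 := h h1
  show ((p.1, (((u : Sinf))⁻¹)⁻¹ p.2) : ℕ × ℕ) ∈ τ
  rw [inv_inv]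
  exact h2

theorem Bset_main (hbasis : TopologicalSpace.IsTopologicalBasis (Set.range A)) (x : X)
    (α : Ordinal.{0}) :
    1 ≤ α →
    (∀ σ ∈ SGfin G, setOrb G (Vb G σ) x ⊆ Bset G A α σ x) ∧
    (∀ σ ∈ SGfin G, ∀ u : G, Bset G A α (compL (↑u) σ) x ⊆ u • Bset G A α σ x) ∧
    (∀ σ ∈ SGfin G, ∀ δ ∈ SGfin G, σ ⊆ δ → Bset G A α δ x ⊆ Bset G A α σ x) := by
  induction α using Ordinal.limitRecOn with
  | zero =>
    intro h
    exact absurd h (by simp)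
  | add_one o IH =>
    rw [Ordinal.add_one_eq_succ]
    intro _
    by_cases ho : o = 0
    · subst ho
      have hB : Bset G A (Order.succ (0 : Ordinal.{0})) = BsetOne G A := by
        rw [Ordinal.succ_zero]; exact Bset_one A
      refine ⟨fun σ _ => ?_, fun σ _ u => ?_, fun σ _ δ hδ hσδ => ?_⟩
      · rw [hB]; exact BsetOne_orbit σ x
      · simp only [hB]; exact BsetOne_transl hbasis σ x u
      · simp only [hB]; exact BsetOne_ext hbasis hδ hσδ x
    · have h1o : (1 : Ordinal.{0}) ≤ o := Ordinal.one_le_iff_ne_zero.mpr ho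
      obtain ⟨IH1, IH2, IH3⟩ := IH h1o
      have hB : Bset G A (Order.succ o) = BsetSucc G (Bset G A o) := Bset_succ A ho
      refine ⟨?_, ?_, ?_⟩
      · -- orbit
        rintro σ hσ _ ⟨g, hg, rfl⟩
        rw [hB, mem_BsetSucc]
        constructor
        · intro b hb
          refine ⟨restr (↑g) b, ⟨↑g, g.2, b, rfl⟩, ?_, pdom_restr _ _, ?_⟩
          · intro p hp
            exact ⟨hb ⟨p, hp, rfl⟩, hg p hp⟩
          · exact IH1 _ ⟨↑g, g.2, b, rfl⟩ ⟨g, fun p hp => hp.2, rfl⟩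
        · intro a ha
          refine ⟨restr (↑g) (a.image (fun k => ((g : Sinf))⁻¹ k)),
            ⟨↑g, g.2, _, rfl⟩, ?_, ?_, IH1 _ ⟨↑g, g.2, _, rfl⟩ ⟨g, fun p hp => hp.2, rfl⟩⟩
          · intro p hp
            refine ⟨Finset.mem_image.mpr ⟨p.2, ?_, ?_⟩, hg p hp⟩
            · exact_mod_cast ha ⟨p, hp, rfl⟩
            · rw [Equiv.Perm.inv_eq_iff_eq]; exact (hg p hp).symm
          · rw [prng_restr, Finset.coe_image, Set.image_image]
            simp
      · -- translation
        intro σ hσ u y hy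
        rw [Set.mem_smul_set_iff_inv_smul_mem]
        rw [hB, mem_BsetSucc] at hy
        rw [hB, mem_BsetSucc]
        obtain ⟨hy1, hy2⟩ := hy
        constructor
        · intro b hb
          have hb' : pdom (compL (↑u) σ) ⊆ ↑b := by rwa [pdom_compL]
          obtain ⟨τ, hτ, hsubτ, hdomτ, hyτ⟩ := hy1 b hb'
          refine ⟨compL ((u : Sinf))⁻¹ τ, SGfin_compL_inv hτ u, subset_compL_inv u hsubτ, ?_, ?_⟩
          · rw [pdom_compL]; exact hdomτ
          · have h3 := IH2 _ (SGfin_compL_inv hτ u) u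
            rw [compL_inv_cancel] at h3
            have h4 := h3 hyτ
            rwa [Set.mem_smul_set_iff_inv_smul_mem] at h4
        · intro a ha
          have ha' : prng (compL (↑u) σ) ⊆ ↑(a.image (fun k => (u : Sinf) k)) := by
            rw [prng_compL, Finset.coe_image]
            exact Set.image_mono ha
          obtain ⟨τ, hτ, hsubτ, hrngτ, hyτ⟩ := hy2 _ ha'
          refine ⟨compL ((u : Sinf))⁻¹ τ, SGfin_compL_inv hτ u, subset_compL_inv u hsubτ, ?_, ?_⟩
          · rw [prng_compL, hrngτ, Finset.coe_image, Set.image_image]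
            simp
          · have h3 := IH2 _ (SGfin_compL_inv hτ u) u
            rw [compL_inv_cancel] at h3
            have h4 := h3 hyτ
            rwa [Set.mem_smul_set_iff_inv_smul_mem] at h4
      · -- extension
        intro σ hσ δ hδ hσδ y hy
        rw [hB, mem_BsetSucc] at hy ⊢
        obtain ⟨hy1, hy2⟩ := hy
        obtain ⟨gδ, hgδ, dδ, rfl⟩ := hδ
        constructor
        · intro b hb
          have hbd : pdom (restr gδ dδ) ⊆ ↑(b ∪ dδ) := by
            rw [pdom_restr]
            exact_mod_cast Finset.coe_subset.mpr Finset.subset_union_right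
          obtain ⟨τ, hτ, hsubτ, hdomτ, hyτ⟩ := hy1 (b ∪ dδ) hbd
          obtain ⟨gτ, hgτ, dτ, rfl⟩ := hτ
          have hdd : dτ = b ∪ dδ := by
            apply Finset.coe_inj.mp
            rw [← pdom_restr gτ dτ]
            exact hdomτ
          refine ⟨restr gτ b, ⟨gτ, hgτ, b, rfl⟩, ?_, pdom_restr _ _, ?_⟩
          · intro p hp
            exact ⟨hb ⟨p, hp, rfl⟩, (hsubτ (hσδ hp)).2⟩
          · refine IH3 _ ⟨gτ, hgτ, b, rfl⟩ _ ⟨gτ, hgτ, dτ, rfl⟩ ?_ hyτ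
            intro p hp
            refine ⟨?_, hp.2⟩
            rw [hdd]
            exact Finset.mem_union_left _ hp.1
        · intro a ha
          have had : prng (restr gδ dδ) ⊆ ↑(a ∪ dδ.image (fun k => gδ k)) := by
            rw [prng_restr]
            intro k hk
            rw [Finset.coe_union, Finset.coe_image]
            exact Or.inr hk
          obtain ⟨τ, hτ, hsubτ, hrngτ, hyτ⟩ := hy2 _ had
          obtain ⟨gτ, hgτ, dτ, rfl⟩ := hτ
          rw [prng_restr] at hrngτ
          classical
          refine ⟨restr gτ (dτ.filter (fun j => gτ j ∈ a)),
            ⟨gτ, hgτ, _, rfl⟩, ?_, ?_, ?_⟩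
          · intro p hp
            have hpτ := hsubτ (hσδ hp)
            have hpa : p.2 ∈ a := by exact_mod_cast ha ⟨p, hp, rfl⟩
            exact ⟨Finset.mem_filter.mpr ⟨hpτ.1, by rw [hpτ.2]; exact hpa⟩, hpτ.2⟩
          · rw [prng_restr]
            ext k
            constructor
            · rintro ⟨j, hj, rfl⟩
              have hj' := Finset.mem_filter.mp (by exact_mod_cast hj)
              exact_mod_cast hj'.2
            · intro hk
              have hk2 : k ∈ ⇑gτ '' ↑dτ := by
                rw [hrngτ, Finset.coe_union]
                exact Or.inl hk
              obtain ⟨j, hj, rfl⟩ := hk2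
              refine ⟨j, ?_, rfl⟩
              have hja : gτ j ∈ a := by exact_mod_cast hk
              have hjd : j ∈ dτ := by exact_mod_cast hj
              exact Finset.mem_coe.mpr (Finset.mem_filter.mpr ⟨hjd, hja⟩)
          · refine IH3 _ ⟨gτ, hgτ, _, rfl⟩ _ ⟨gτ, hgτ, dτ, rfl⟩ ?_ hyτ
            intro p hp
            exact ⟨(Finset.mem_filter.mp hp.1).1, hp.2⟩
  | limit o ho IH =>
    intro _
    refine ⟨?_, ?_, ?_⟩
    · intro σ hσ y hy
      rw [Bset_limit A ho]
      simp only [Set.mem_iInter]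
      intro β hβ h1β
      exact ((IH β hβ h1β).1 σ hσ) hy
    · intro σ hσ u y hy
      rw [Bset_limit A ho] at hy
      rw [Set.mem_smul_set_iff_inv_smul_mem, Bset_limit A ho]
      simp only [Set.mem_iInter] at hy ⊢
      intro β hβ h1β
      have h1 := (IH β hβ h1β).2.1 σ hσ u (hy β hβ h1β)
      rwa [Set.mem_smul_set_iff_inv_smul_mem] at h1
    · intro σ hσ δ hδ hσδ y hy
      rw [Bset_limit A ho] at hy ⊢
      simp only [Set.mem_iInter] at hy ⊢
      intro β hβ h1β
      exact (IH β hβ h1β).2.2 σ hσ δ hδ hσδ (hy β hβ h1β)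

end Proofs4

section Proofs5

variable {G : Subgroup Sinf} {X : Type*} [TopologicalSpace X] [MulAction G X]
  [ContinuousSMul G X] {A : ℕ → Set X}

theorem Bset_mono (hbasis : TopologicalSpace.IsTopologicalBasis (Set.range A)) (x : X)
    (α : Ordinal.{0}) :
    ∀ β : Ordinal.{0}, 1 ≤ β → β ≤ α → ∀ σ ∈ SGfin G,
      Bset G A α σ x ⊆ Bset G A β σ x := by
  induction α using Ordinal.limitRecOn with
  | zero =>
    intro β h1β hβ0 σ _
    have hβ : β = 0 := nonpos_iff_eq_zero.mp hβ0
    exact absurd (hβ ▸ h1β) (by simp)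
  | add_one o IH =>
    rw [Ordinal.add_one_eq_succ]
    intro β h1β hβ σ hσ
    rcases eq_or_lt_of_le hβ with heq | hlt
    · rw [heq]
    · have hβo : β ≤ o := Order.lt_succ_iff.mp hlt
      have h1o : (1 : Ordinal.{0}) ≤ o := le_trans h1β hβo
      have ho : o ≠ 0 := Ordinal.one_le_iff_ne_zero.mp h1o
      have step : Bset G A (Order.succ o) σ x ⊆ Bset G A o σ x := by
        intro y hy
        rw [Bset_succ A ho, mem_BsetSucc] at hy
        obtain ⟨gσ, hgσ, dσ, rfl⟩ := hσ
        obtain ⟨τ, hτ, hστ, _, hyτ⟩ := hy.1 dσ (by rw [pdom_restr])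
        exact ((Bset_main hbasis x o h1o).2.2 _ ⟨gσ, hgσ, dσ, rfl⟩ τ hτ hστ) hyτ
      exact step.trans (IH β h1β hβo σ hσ)
  | limit o ho IH =>
    intro β h1β hβ σ hσ
    rcases eq_or_lt_of_le hβ with heq | hlt
    · rw [heq]
    · intro y hy
      rw [Bset_limit A ho] at hy
      simp only [Set.mem_iInter] at hy
      exact hy β hlt h1β

end Proofs5

/-- Monotonicity and invariance of α-sets. -/
theorem alphaSet_monotone_and_invariant
    (G : Subgroup Sinf) (hGclosed : IsClosed (G : Set Sinf))
    {X : Type*} [TopologicalSpace X] [PolishSpace X] [MulAction G X] [ContinuousSMul G X]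
    (A : ℕ → Set X) (hbasis : TopologicalSpace.IsTopologicalBasis (Set.range A))
    (hbasisInv : ∀ l, ∃ c : Finset ℕ, ∀ g ∈ Vc G (↑c : Set ℕ), g • A l = A l)
    (x : X) (σ : Set (ℕ × ℕ)) (hσ : σ ∈ SGfin G)
    (α β : Ordinal.{0}) (hα : 1 ≤ α) (hαc : α.card ≤ Cardinal.aleph0)
    (hβ : 1 ≤ β) (hβc : β.card ≤ Cardinal.aleph0) :
    (β ≤ α → Bset G A α σ x ⊆ Bset G A β σ x) ∧
    (setOrb G (Vb G σ) x ⊆ Bset G A α σ x ∧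
      ∀ g ∈ Vc G (prng σ), g • Bset G A α σ x = Bset G A α σ x) ∧
    (∀ δ ∈ SGfin G, σ ⊆ δ → Bset G A α δ x ⊆ Bset G A α σ x) := by
  refine ⟨fun hβα => Bset_mono hbasis x α β hβ hβα σ hσ, ⟨?_, ?_⟩, ?_⟩
  · exact (Bset_main hbasis x α hα).1 σ hσ
  · intro g hg
    have h1 := (Bset_main hbasis x α hα).2.1 σ hσ g
    rw [compL_eq_self hg] at h1
    have h2 := (Bset_main hbasis x α hα).2.1 _ (SGfin_compL hσ g) g⁻¹
    rw [compL_eq_self hg, compL_eq_self (Vc_inv hg)] at h2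
    apply Set.Subset.antisymm
    · calc g • Bset G A α σ x ⊆ g • (g⁻¹ • Bset G A α σ x) := Set.smul_set_mono h2
        _ = Bset G A α σ x := smul_inv_smul g _
    · exact h1
  · intro δ hδ hσδ
    exact (Bset_main hbasis x α hα).2.2 σ hσ δ hδ hσδ
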